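/- arXiv:2006.10364 — 5 statements merged into one kernel-verified Lean document; each statement's English description precedes it below -/
import Mathlib

section
/- If a graph G is k-contractible to a complete graph, then there exists a set S of at most 2k vertices of G such that the induced subgraph G − S is a complete graph. -/
/-- `ψ` realizes an `H`-witness structure of `G`. -/
def IsWitnessStructure {V W : Type*} (G : SimpleGraph V) (H : SimpleGraph W) (ψ : V → W) : Prop :=
  Function.Surjective ψ ∧
  (∀ h : W, (G.induce {v | ψ v = h}).Connected) ∧
  (∀ h h' : W, h ≠ h' →
    (H.Adj h h' ↔ ∃ u v : V, G.Adj u v ∧ ψ u = h ∧ ψ v = h'))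

/-- If `G` is `k`-contractible to a complete graph, then one can delete at most `2k`
vertices from `G` so that the remaining induced subgraph is complete. -/
theorem stmt_2 {V W : Type*} [Fintype V] [Fintype W]
    (G : SimpleGraph V) (H : SimpleGraph W) (ψ : V → W) (k : ℕ)
    (hcomplete : ∀ h h' : W, h ≠ h' → H.Adj h h')
    (hw : IsWitnessStructure G H ψ)
    (hcost : ∑ h : W, ({v : V | ψ v = h}.ncard - 1) ≤ k) :
    ∃ S : Set V, S.ncard ≤ 2 * k ∧
      ∀ u v : V, u ∉ S → v ∉ S → u ≠ v → G.Adj u v := by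
  classical
  obtain ⟨hsurj, hconn, hadj⟩ := hw
  -- fiber as Finset
  set F : W → Finset V := fun h => Finset.univ.filter (fun v => ψ v = h) with hF
  have hncard : ∀ h : W, ({v : V | ψ v = h}).ncard = (F h).card := by
    intro h
    rw [Set.ncard_eq_toFinset_card']
    congr 1
    ext v
    simp [hF]
  set S : Set V := {v | 2 ≤ (F (ψ v)).card} with hSdef
  refine ⟨S, ?_, ?_⟩
  · have hSfin : S.toFinset = Finset.univ.filter (fun v => 2 ≤ (F (ψ v)).card) := by
      ext v; simp [hSdef]
    have hcard : S.ncard = S.toFinset.card := Set.ncard_eq_toFinset_card' S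
    rw [hcard, hSfin]
    have hfib : (Finset.univ.filter (fun v => 2 ≤ (F (ψ v)).card)).card
        = ∑ h : W, ((Finset.univ.filter (fun v => 2 ≤ (F (ψ v)).card)).filter
            (fun v => ψ v = h)).card := by
      apply Finset.card_eq_sum_card_fiberwise (f := ψ)
      intro x _; exact Finset.mem_univ _
    rw [hfib]
    have hbound : ∀ h : W, ((Finset.univ.filter (fun v => 2 ≤ (F (ψ v)).card)).filter
        (fun v => ψ v = h)).card ≤ 2 * ((F h).card - 1) := by
      intro h
      by_cases hc : 2 ≤ (F h).card
      · have heq : ((Finset.univ.filter (fun v => 2 ≤ (F (ψ v)).card)).filter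
            (fun v => ψ v = h)) = F h := by
          ext v
          simp only [Finset.mem_filter, Finset.mem_univ, true_and, hF]
          constructor
          · rintro ⟨_, hv⟩; exact hv
          · intro hv; refine ⟨?_, hv⟩
            rw [hv]; simpa [hF] using hc
        rw [heq]; omega
      · have heq : ((Finset.univ.filter (fun v => 2 ≤ (F (ψ v)).card)).filter
            (fun v => ψ v = h)) = ∅ := by
          ext v
          simp only [Finset.mem_filter, Finset.mem_univ, true_and, Finset.notMem_empty,
            iff_false, not_and]
          intro h2 hv
          rw [hv] at h2; exact hc h2
        rw [heq]; simp
    calc ∑ h : W, ((Finset.univ.filter (fun v => 2 ≤ (F (ψ v)).card)).filter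
            (fun v => ψ v = h)).card
        ≤ ∑ h : W, 2 * ((F h).card - 1) := Finset.sum_le_sum (fun h _ => hbound h)
      _ = 2 * ∑ h : W, ((F h).card - 1) := by rw [Finset.mul_sum]
      _ ≤ 2 * k := by
          apply Nat.mul_le_mul_left
          calc ∑ h : W, ((F h).card - 1) = ∑ h : W, (({v : V | ψ v = h}).ncard - 1) := by
                apply Finset.sum_congr rfl; intro h _; rw [hncard]
            _ ≤ k := hcost
  · intro u v hu hv huv
    have hu1 : (F (ψ u)).card ≤ 1 := by
      by_contra hc; exact hu (by simpa [hSdef] using Nat.succ_le_of_lt (Nat.lt_of_not_le hc))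
    have hv1 : (F (ψ v)).card ≤ 1 := by
      by_contra hc; exact hv (by simpa [hSdef] using Nat.succ_le_of_lt (Nat.lt_of_not_le hc))
    have humem : u ∈ F (ψ u) := by simp [hF]
    have hvmem : v ∈ F (ψ v) := by simp [hF]
    have huF : F (ψ u) = {u} := by
      have := Finset.card_le_one.mp hu1
      ext x; simp only [Finset.mem_singleton]
      constructor
      · intro hx; exact this x hx u humem
      · rintro rfl; exact humem
    have hvF : F (ψ v) = {v} := by
      have := Finset.card_le_one.mp hv1
      ext x; simp only [Finset.mem_singleton]
      constructor
      · intro hx; exact this x hx v hvmem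
      · rintro rfl; exact hvmem
    have hne : ψ u ≠ ψ v := by
      intro heq
      have : v ∈ F (ψ u) := by rw [heq]; exact hvmem
      rw [huF] at this
      exact huv (Finset.mem_singleton.mp this).symm
    obtain ⟨u', v', hGuv, hu', hv'⟩ := (hadj _ _ hne).mp (hcomplete _ _ hne)
    have hu'' : u' = u := by
      have : u' ∈ F (ψ u) := by simp [hF, hu']
      rw [huF] at this; exact Finset.mem_singleton.mp this
    have hv'' : v' = v := by
      have : v' ∈ F (ψ v) := by simp [hF, hv']
      rw [hvF] at this; exact Finset.mem_singleton.mp this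
    rw [hu'', hv''] at hGuv
    exact hGuv
end

section
/- If a graph G is k-contractible to a split graph, then there exists a set S of at most 2k vertices of G such that the induced subgraph G − S is a split graph. -/
/-- If `G` is `k`-contractible to a split graph, then one can delete at most `2k`
vertices from `G` so that the remaining induced subgraph is a split graph. -/
theorem stmt_3 {V W : Type*} [Fintype V] [Fintype W]
    (G : SimpleGraph V) (H : SimpleGraph W) (ψ : V → W) (k : ℕ)
    (hsplit : ∃ C I : Set W, C ∪ I = Set.univ ∧ Disjoint C I ∧
      (∀ u ∈ C, ∀ v ∈ C, u ≠ v → H.Adj u v) ∧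
      (∀ u ∈ I, ∀ v ∈ I, ¬ H.Adj u v))
    (hw : IsWitnessStructure G H ψ)
    (hcost : ∑ h : W, ({v : V | ψ v = h}.ncard - 1) ≤ k) :
    ∃ S : Set V, S.ncard ≤ 2 * k ∧
      ∃ C I : Set V, C ∪ I = Sᶜ ∧ Disjoint C I ∧
        (∀ u ∈ C, ∀ v ∈ C, u ≠ v → G.Adj u v) ∧
        (∀ u ∈ I, ∀ v ∈ I, ¬ G.Adj u v) := by
  classical
  obtain ⟨Cw, Iw, hUnion, hDisj, hClique, hIndep⟩ := hsplit
  obtain ⟨hsurj, hconn, hadj⟩ := hw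
  set F : W → Finset V := fun h => Finset.univ.filter (fun v => ψ v = h) with hF
  have hmemF : ∀ v, v ∈ F (ψ v) := fun v => by simp [hF]
  have hmemF' : ∀ v h, v ∈ F h ↔ ψ v = h := fun v h => by simp [hF]
  have hcard : ∀ h, ({v : V | ψ v = h}).ncard = (F h).card := by
    intro h
    rw [Set.ncard_eq_toFinset_card']
    congr 1
    ext v
    simp [hF]
  set S : Set V := {v | 2 ≤ (F (ψ v)).card} with hS
  -- fibers of vertices outside S are singletons
  have hfib : ∀ v, v ∉ S → F (ψ v) = {v} := by
    intro v hv
    have h1 : (F (ψ v)).card ≤ 1 := by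
      by_contra h
      exact hv (by simpa [hS] using Nat.succ_le_of_lt (Nat.lt_of_not_le h))
    have := Finset.card_le_one.mp h1
    apply Finset.eq_singleton_iff_unique_mem.mpr
    exact ⟨hmemF v, fun x hx => this x hx v (hmemF v)⟩
  have hinj : ∀ u v : V, u ∉ S → ψ v = ψ u → v = u := by
    intro u v hu he
    have : v ∈ F (ψ u) := (hmemF' v (ψ u)).mpr he
    rw [hfib u hu] at this
    simpa using this
  refine ⟨S, ?_, ?_⟩
  · -- cardinality bound
    have hSfin : S.ncard = (Finset.univ.filter (fun v => 2 ≤ (F (ψ v)).card)).card := by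
      rw [Set.ncard_eq_toFinset_card']
      congr 1
      ext v
      simp [hS]
    rw [hSfin]
    set Sfin := Finset.univ.filter (fun v => 2 ≤ (F (ψ v)).card) with hSfd
    have hpart : Sfin.card = ∑ h : W, (Sfin.filter (fun v => ψ v = h)).card :=
      Finset.card_eq_sum_card_fiberwise (fun v _ => Finset.mem_univ (ψ v))
    have hbound : ∀ h : W, (Sfin.filter (fun v => ψ v = h)).card ≤ 2 * ((F h).card - 1) := by
      intro h
      by_cases h2 : 2 ≤ (F h).card
      · have hsub : Sfin.filter (fun v => ψ v = h) ⊆ F h := by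
          intro v hv
          simp only [Finset.mem_filter] at hv
          exact (hmemF' v h).mpr hv.2
        have := Finset.card_le_card hsub
        omega
      · have : Sfin.filter (fun v => ψ v = h) = ∅ := by
          apply Finset.filter_eq_empty_iff.mpr
          intro v hv he
          simp only [hSfd, Finset.mem_filter] at hv
          rw [he] at hv
          exact h2 hv.2
        simp [this]
    calc Sfin.card ≤ ∑ h : W, 2 * ((F h).card - 1) := by
          rw [hpart]; exact Finset.sum_le_sum fun h _ => hbound h
      _ = 2 * ∑ h : W, ((F h).card - 1) := by rw [Finset.mul_sum]
      _ ≤ 2 * k := by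
          apply Nat.mul_le_mul_left
          calc ∑ h : W, ((F h).card - 1) = ∑ h : W, ({v : V | ψ v = h}.ncard - 1) := by
                apply Finset.sum_congr rfl
                intro h _
                rw [hcard h]
            _ ≤ k := hcost
  · refine ⟨{v | v ∉ S ∧ ψ v ∈ Cw}, {v | v ∉ S ∧ ψ v ∈ Iw}, ?_, ?_, ?_, ?_⟩
    · ext v
      simp only [Set.mem_union, Set.mem_setOf_eq, Set.mem_compl_iff]
      constructor
      · rintro (⟨h, _⟩ | ⟨h, _⟩) <;> exact h
      · intro hv
        have : ψ v ∈ Cw ∪ Iw := by rw [hUnion]; trivial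
        rcases this with h | h
        · exact Or.inl ⟨hv, h⟩
        · exact Or.inr ⟨hv, h⟩
    · rw [Set.disjoint_left]
      rintro v ⟨_, hC⟩ ⟨_, hI⟩
      exact (Set.disjoint_left.mp hDisj hC) hI
    · rintro u ⟨huS, huC⟩ v ⟨hvS, hvC⟩ huv
      have hne : ψ u ≠ ψ v := fun he => huv (hinj u v huS he.symm).symm
      have hH : H.Adj (ψ u) (ψ v) := hClique _ huC _ hvC hne
      obtain ⟨u', v', hG, hu', hv'⟩ := (hadj _ _ hne).mp hH
      have : u' = u := hinj u u' huS hu'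
      have hv'' : v' = v := hinj v v' hvS hv'
      rwa [this, hv''] at hG
    · rintro u ⟨huS, huI⟩ v ⟨hvS, hvI⟩ hG
      have hne : ψ u ≠ ψ v := by
        intro he
        have hvu : v = u := hinj u v huS he.symm
        exact G.loopless.irrefl u (hvu ▸ hG)
      exact hIndep _ huI _ hvI ((hadj _ _ hne).mpr ⟨u, v, hG, rfl, rfl⟩)
end

section
/- Let G be a connected graph that is contractible to a split graph H with contraction cost c (i.e., via an H-witness structure with Σ_{h ∈ V(H)} (|W(h)| − 1) = c). Then G is contractible to a split graph H' with contraction cost at most c such that H' admits a split partition (C, I) into a clique C and an independent set I in which every vertex of I has a trivial (singleton) witness set; that is, all vertices of H' corresponding to nontrivial witness sets lie on the clique side. -/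
open SimpleGraph

/-- The graph obtained from `G` by contracting the fibers of `ψ`. -/
def mapGraph {V W : Type*} (G : SimpleGraph V) (ψ : V → W) : SimpleGraph W where
  Adj h h' := h ≠ h' ∧ ∃ u v : V, G.Adj u v ∧ ψ u = h ∧ ψ v = h'
  symm := by
    refine ⟨?_⟩; rintro h h' ⟨hne, u, v, ha, hu, hv⟩
    exact ⟨hne.symm, v, u, ha.symm, hv, hu⟩
  loopless := by refine ⟨?_⟩; rintro h ⟨hne, -⟩; exact hne rfl

lemma induce_singleton_connected {V : Type*} (G : SimpleGraph V) (v : V) :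
    (G.induce {v}).Connected := by
  haveI : Nonempty ({v} : Set V) := ⟨⟨v, rfl⟩⟩
  refine ⟨fun a b => ?_⟩
  have : a = b := Subtype.ext ((Set.eq_of_mem_singleton a.2).trans
    (Set.eq_of_mem_singleton b.2).symm)
  exact this ▸ SimpleGraph.Reachable.refl a

lemma removable {V : Type*} [Fintype V] (G : SimpleGraph V) (S : Set V)
    (hconn : (G.induce S).Connected) {r : V} (hr : r ∈ S)
    (hex : ∃ w ∈ S, w ≠ r) :
    ∃ v ∈ S, v ≠ r ∧ (G.induce (S \ {v})).Connected := by
  classical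
  have : Nonempty ↥S := ⟨⟨r, hr⟩⟩
  obtain ⟨v', hmax⟩ := Finite.exists_max (fun x : ↥S => (G.induce S).dist ⟨r, hr⟩ x)
  obtain ⟨w, hwS, hwr⟩ := hex
  have hwpos : 0 < (G.induce S).dist ⟨r, hr⟩ ⟨w, hwS⟩ :=
    hconn.pos_dist_of_ne (fun h => hwr (congrArg Subtype.val h).symm)
  have hvr : (v' : V) ≠ r := by
    intro h
    have hv'eq : v' = (⟨r, hr⟩ : ↥S) := Subtype.ext h
    have := hmax ⟨w, hwS⟩
    rw [hv'eq, SimpleGraph.dist_self] at this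
    omega
  refine ⟨v', v'.2, hvr, ?_⟩
  have hrS' : r ∈ S \ {(v' : V)} := ⟨hr, by simpa using hvr.symm⟩
  apply SimpleGraph.induce_connected_of_patches r hrS'
  rintro u ⟨huS, huv⟩
  have huv : u ≠ (v' : V) := by simpa using huv
  obtain ⟨p, hp⟩ := (hconn.preconnected ⟨r, hr⟩ ⟨u, huS⟩).exists_walk_length_eq_dist
  have hvnot : (⟨(v' : V), v'.2⟩ : ↥S) ∉ p.support := by
    intro hsup
    have h1 : (G.induce S).dist ⟨r, hr⟩ ⟨(v' : V), v'.2⟩ ≤ (p.takeUntil _ hsup).length :=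
      SimpleGraph.dist_le _
    have h2 : (p.takeUntil _ hsup).length + (p.dropUntil _ hsup).length = p.length := by
      have := congrArg SimpleGraph.Walk.length (p.take_spec hsup)
      rwa [SimpleGraph.Walk.length_append] at this
    have h3 : p.length ≤ (G.induce S).dist ⟨r, hr⟩ ⟨(v' : V), v'.2⟩ := by
      rw [hp]
      exact hmax ⟨u, huS⟩
    have h4 : (p.dropUntil _ hsup).length = 0 := by omega
    have h5 := SimpleGraph.Walk.eq_of_length_eq_zero h4
    exact huv (congrArg Subtype.val h5).symm
  let pm := p.map (SimpleGraph.Embedding.induce S).toHom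
  refine ⟨{x | x ∈ pm.support}, ?_, pm.start_mem_support, pm.end_mem_support, ?_⟩
  · intro x hx
    rw [Set.mem_setOf_eq, SimpleGraph.Walk.support_map, List.mem_map] at hx
    obtain ⟨y, hy, rfl⟩ := hx
    refine ⟨y.2, ?_⟩
    intro hmem
    have : y = ⟨(v' : V), v'.2⟩ := Subtype.ext (by simpa using hmem)
    exact hvnot (this ▸ hy)
  · exact (pm.connected_induce_support).preconnected ⟨r, pm.start_mem_support⟩
      ⟨u, pm.end_mem_support⟩


lemma key {V W : Type*} [Fintype V] [Fintype W] (G : SimpleGraph V) (hG : G.Connected) :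
    ∀ (m : ℕ) (ψ : V → W) (C I : Set W),
      Function.Surjective ψ →
      (∀ h, (G.induce {v | ψ v = h}).Connected) →
      C ∪ I = Set.univ → Disjoint C I →
      (∀ u ∈ C, ∀ v ∈ C, u ≠ v → (mapGraph G ψ).Adj u v) →
      (∀ u ∈ I, ∀ v ∈ I, ¬ (mapGraph G ψ).Adj u v) →
      {i ∈ I | 2 ≤ {v | ψ v = i}.ncard}.ncard ≤ m →
      ∃ (ψ' : V → W) (C' I' : Set W),
        Function.Surjective ψ' ∧
        (∀ h, (G.induce {v | ψ' v = h}).Connected) ∧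
        C' ∪ I' = Set.univ ∧ Disjoint C' I' ∧
        (∀ u ∈ C', ∀ v ∈ C', u ≠ v → (mapGraph G ψ').Adj u v) ∧
        (∀ u ∈ I', ∀ v ∈ I', ¬ (mapGraph G ψ').Adj u v) ∧
        (∀ i ∈ I', {v : V | ψ' v = i}.ncard = 1) := by
  classical
  intro m
  induction m with
  | zero =>
    intro ψ C I hsurj hfib hcov hdis hclq hind hm
    refine ⟨ψ, C, I, hsurj, hfib, hcov, hdis, hclq, hind, fun i hiI => ?_⟩
    have h1 : ¬ (2 ≤ {v | ψ v = i}.ncard) := by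
      intro h2
      have h3 : i ∈ ({i ∈ I | 2 ≤ {v | ψ v = i}.ncard} : Set W) := ⟨hiI, h2⟩
      have h4 : 0 < {i ∈ I | 2 ≤ {v | ψ v = i}.ncard}.ncard :=
        (Set.ncard_pos (Set.toFinite _)).2 ⟨i, h3⟩
      omega
    have hpos : 0 < {v : V | ψ v = i}.ncard := by
      rw [Set.ncard_pos (Set.toFinite _)]
      exact Set.nonempty_coe_sort.1 (hfib i).nonempty
    omega
  | succ m ih =>
    intro ψ C I hsurj hfib hcov hdis hclq hind hm
    by_cases hne : {i ∈ I | 2 ≤ {v | ψ v = i}.ncard}.Nonempty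
    swap
    · refine ⟨ψ, C, I, hsurj, hfib, hcov, hdis, hclq, hind, fun i hiI => ?_⟩
      have h1 : ¬ (2 ≤ {v | ψ v = i}.ncard) := fun h2 => hne ⟨i, hiI, h2⟩
      have hpos : 0 < {v : V | ψ v = i}.ncard := by
        rw [Set.ncard_pos (Set.toFinite _)]
        exact Set.nonempty_coe_sort.1 (hfib i).nonempty
      omega
    obtain ⟨i, hiI, hi2⟩ := hne
    by_cases hc : ∃ c0 ∈ C, (mapGraph G ψ).Adj i c0
    · -- main case: move all but one vertex of the fiber of i into the fiber of c0
      obtain ⟨c0, hc0C, hic0, u0, v0, hG0, hu0, hv0⟩ := hc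
      set S : Set V := {v | ψ v = i} with hS
      have hu0S : u0 ∈ S := hu0
      have hex : ∃ w ∈ S, w ≠ u0 := by
        obtain ⟨a, b, haS, hbS, hab⟩ := (Set.one_lt_ncard_iff (Set.toFinite S)).1 hi2
        by_cases h : a = u0
        · exact ⟨b, hbS, fun hb => hab (by rw [h, hb])⟩
        · exact ⟨a, haS, h⟩
      obtain ⟨v, hvS, hvu0, hconn'⟩ := removable G S (hfib i) hu0S hex
      set ψ' : V → W := fun x => if ψ x = i ∧ x ≠ v then c0 else ψ x with hψ'
      have hval : ∀ x, ψ' x = if ψ x = i ∧ x ≠ v then c0 else ψ x := fun x => rfl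
      have F1 : ∀ x, ψ' x = i ↔ x = v := by
        intro x
        rw [hval]
        by_cases h : ψ x = i ∧ x ≠ v
        · rw [if_pos h]
          exact ⟨fun hh => absurd hh.symm hic0, fun hh => absurd hh h.2⟩
        · rw [if_neg h]
          constructor
          · intro hxi
            by_contra hxv
            exact h ⟨hxi, hxv⟩
          · rintro rfl; exact hvS
      have F3 : ∀ h, h ≠ i → h ≠ c0 → ∀ x, (ψ' x = h ↔ ψ x = h) := by
        intro h hhi hhc x
        rw [hval]
        by_cases hb : ψ x = i ∧ x ≠ v
        · rw [if_pos hb]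
          constructor
          · intro hh; exact absurd hh.symm hhc
          · intro hh; rw [hb.1] at hh; exact absurd hh.symm hhi
        · rw [if_neg hb]
      have E1 : {x | ψ' x = i} = {v} := by
        ext x; simpa using F1 x
      have E2 : {x | ψ' x = c0} = {x | ψ x = c0} ∪ (S \ {v}) := by
        ext x
        simp only [Set.mem_setOf_eq, Set.mem_union, Set.mem_diff, Set.mem_singleton_iff, hval, hS]
        by_cases hb : ψ x = i ∧ x ≠ v
        · rw [if_pos hb]
          simp [hb.1, hb.2]
        · rw [if_neg hb]
          constructor
          · intro hh; exact Or.inl hh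
          · rintro (hh | ⟨hxi, hxv⟩)
            · exact hh
            · exact absurd ⟨hxi, hxv⟩ hb
      have E3 : ∀ h, h ≠ i → h ≠ c0 → {x | ψ' x = h} = {x | ψ x = h} := by
        intro h h1 h2; ext x; exact F3 h h1 h2 x
      -- preservation of fibers of the clique side
      have Fmono : ∀ x h, h ≠ i → ψ x = h → ψ' x = h := by
        intro x h hhi hx
        rw [hval]
        have : ¬ (ψ x = i ∧ x ≠ v) := fun hh => hhi (hx ▸ hh.1 ▸ rfl)
        rw [if_neg this, hx]
      -- surjectivity
      have hsurj' : Function.Surjective ψ' := by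
        intro h
        by_cases h1 : h = i
        · exact ⟨v, by rw [h1]; exact (F1 v).2 rfl⟩
        by_cases h2 : h = c0
        · exact ⟨v0, by rw [h2]; exact Fmono v0 c0 (Ne.symm hic0) hv0⟩
        · obtain ⟨x, hx⟩ := hsurj h
          exact ⟨x, (F3 h h1 h2 x).2 hx⟩
      -- fibers connected
      have hfib' : ∀ h, (G.induce {v | ψ' v = h}).Connected := by
        intro h
        by_cases h1 : h = i
        · rw [h1, E1]; exact induce_singleton_connected G v
        by_cases h2 : h = c0
        · rw [h2, E2]
          have hu0' : u0 ∈ S \ {v} :=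
            ⟨hu0S, by simp only [Set.mem_singleton_iff]; exact fun hh => hvu0 hh.symm⟩
          exact SimpleGraph.connected_induce_union (hfib c0).preconnected hconn'.preconnected hv0 hu0' hG0.symm
        · rw [E3 h h1 h2]; exact hfib h
      -- clique side
      have hclq' : ∀ u ∈ C, ∀ w ∈ C, u ≠ w → (mapGraph G ψ').Adj u w := by
        intro u hu w hw huw
        obtain ⟨-, a, b, hab, ha, hb⟩ := hclq u hu w hw huw
        have hui : u ≠ i := fun hh => (hdis.le_bot ⟨hu, hh ▸ hiI⟩)
        have hwi : w ≠ i := fun hh => (hdis.le_bot ⟨hw, hh ▸ hiI⟩)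
        exact ⟨huw, a, b, hab, Fmono a u hui ha, Fmono b w hwi hb⟩
      -- independent side
      have hind' : ∀ u ∈ I, ∀ w ∈ I, ¬ (mapGraph G ψ').Adj u w := by
        rintro u hu w hw ⟨huw, a, b, hab, ha, hb⟩
        have huc : u ≠ c0 := fun hh => (hdis.le_bot ⟨hh ▸ hc0C, hu⟩)
        have hwc : w ≠ c0 := fun hh => (hdis.le_bot ⟨hh ▸ hc0C, hw⟩)
        have ha' : ψ a = u := by
          rw [hval] at ha
          by_cases hbr : ψ a = i ∧ a ≠ v
          · rw [if_pos hbr] at ha; exact absurd ha.symm huc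
          · rwa [if_neg hbr] at ha
        have hb' : ψ b = w := by
          rw [hval] at hb
          by_cases hbr : ψ b = i ∧ b ≠ v
          · rw [if_pos hbr] at hb; exact absurd hb.symm hwc
          · rwa [if_neg hbr] at hb
        exact hind u hu w hw ⟨huw, a, b, hab, ha', hb'⟩
      -- the measure decreases
      have hmeas : {j ∈ I | 2 ≤ {x | ψ' x = j}.ncard}.ncard ≤ m := by
        have hsub : {j ∈ I | 2 ≤ {x | ψ' x = j}.ncard} ⊆
            {j ∈ I | 2 ≤ {x | ψ x = j}.ncard} \ {i} := by
          rintro j ⟨hjI, hj2⟩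
          have hjc : j ≠ c0 := fun hh => (hdis.le_bot ⟨hh ▸ hc0C, hjI⟩)
          have hji : j ≠ i := by
            rintro rfl
            rw [E1, Set.ncard_singleton] at hj2
            omega
          rw [E3 j hji hjc] at hj2
          exact ⟨⟨hjI, hj2⟩, hji⟩
        have h1 : {j ∈ I | 2 ≤ {x | ψ' x = j}.ncard}.ncard ≤
            ({j ∈ I | 2 ≤ {x | ψ x = j}.ncard} \ {i}).ncard :=
          Set.ncard_le_ncard hsub (Set.toFinite _)
        have h2 : ({j ∈ I | 2 ≤ {x | ψ x = j}.ncard} \ {i}).ncard =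
            {j ∈ I | 2 ≤ {x | ψ x = j}.ncard}.ncard - 1 :=
          Set.ncard_diff_singleton_of_mem ⟨hiI, hi2⟩
        have h3 : 0 < {j ∈ I | 2 ≤ {x | ψ x = j}.ncard}.ncard :=
          (Set.ncard_pos (Set.toFinite _)).2 ⟨i, hiI, hi2⟩
        omega
      exact ih ψ' C I hsurj' hfib' hcov hdis hclq' hind' hmeas
    · -- degenerate case: i has no neighbor at all, so W has a unique inhabited fiber
      have hnonbr : ∀ h, ¬ (mapGraph G ψ).Adj i h := by
        intro h hadj
        have hh : h ∈ C ∪ I := hcov ▸ Set.mem_univ h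
        rcases hh with hhC | hhI
        · exact hc ⟨h, hhC, hadj⟩
        · exact hind i hiI h hhI hadj
      have hfibuniv : ∀ x, ψ x = i := by
        by_contra hx
        push_neg at hx
        obtain ⟨x, hxne⟩ := hx
        obtain ⟨y, hy⟩ : ∃ y, ψ y = i :=
          Set.nonempty_coe_sort.1 (hfib i).nonempty
        have cross : ∀ {a b : V} (p : G.Walk a b), ψ a = i → ψ b ≠ i →
            ∃ u w, G.Adj u w ∧ ψ u = i ∧ ψ w ≠ i := by
          intro a b p
          induction p with
          | nil => intro h1 h2; exact absurd h1 h2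
          | @cons a' b' c' ha p ihp =>
            intro h1 h2
            by_cases hmid : ψ b' = i
            · exact ihp hmid h2
            · exact ⟨a', b', ha, h1, hmid⟩
        obtain ⟨u, w, huw, hui, hwi⟩ :=
          cross ((hG.preconnected y x).some) hy hxne
        exact hnonbr (ψ w) ⟨fun hh => hwi hh.symm, u, w, huw, hui, rfl⟩
      have hall : ∀ h : W, h = i := by
        intro h
        obtain ⟨x, hx⟩ := hsurj h
        rw [← hx, hfibuniv x]
      refine ⟨ψ, Set.univ, ∅, hsurj, hfib, by simp, by simp, ?_, by simp, by simp⟩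
      intro u _ w _ huw
      exact absurd ((hall u).trans (hall w).symm) huw

lemma sum_fibers {V W : Type*} [Fintype V] [Fintype W] (ψ : V → W)
    (hne : ∀ h : W, {v | ψ v = h}.Nonempty) :
    ∑ h : W, ({v : V | ψ v = h}.ncard - 1) + Fintype.card W = Fintype.card V := by
  classical
  have h1 : ∀ h : W, {v : V | ψ v = h}.ncard = (Finset.univ.filter fun v => ψ v = h).card := by
    intro h
    rw [← Set.ncard_coe_finset]
    congr 1
    ext x; simp
  have h2 : ∑ h : W, {v : V | ψ v = h}.ncard = Fintype.card V := by
    simp_rw [h1]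
    rw [← Finset.card_eq_sum_card_fiberwise (fun x _ => Finset.mem_univ (ψ x))]
    rfl
  have h3 : ∀ h : W, 1 ≤ {v : V | ψ v = h}.ncard := fun h =>
    (Set.ncard_pos (Set.toFinite _)).2 (hne h)
  calc ∑ h : W, ({v : V | ψ v = h}.ncard - 1) + Fintype.card W
      = ∑ h : W, (({v : V | ψ v = h}.ncard - 1) + 1) := by
        rw [Finset.sum_add_distrib, Finset.sum_const, Finset.card_univ, smul_eq_mul, mul_one]
    _ = ∑ h : W, {v : V | ψ v = h}.ncard := Finset.sum_congr rfl (fun h _ => by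
        have := h3 h; omega)
    _ = Fintype.card V := h2

/-- If a connected graph `G` is contractible to a split graph `H` with contraction
cost `c`, then `G` is contractible, with contraction cost at most `c`, to a split
graph `H'` having a split partition `(C, I)` in which every vertex of `I` has a
trivial (singleton) witness set. -/
theorem stmt_5 {V W : Type*} [Fintype V] [Fintype W]
    (G : SimpleGraph V) (hGconn : G.Connected)
    (H : SimpleGraph W) (ψ : V → W) (c : ℕ)
    (hsplit : ∃ C I : Set W, C ∪ I = Set.univ ∧ Disjoint C I ∧
      (∀ u ∈ C, ∀ v ∈ C, u ≠ v → H.Adj u v) ∧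
      (∀ u ∈ I, ∀ v ∈ I, ¬ H.Adj u v))
    (hw : IsWitnessStructure G H ψ)
    (hc : ∑ h : W, ({v : V | ψ v = h}.ncard - 1) = c) :
    ∃ (n : ℕ) (H' : SimpleGraph (Fin n)) (ψ' : V → Fin n) (C I : Set (Fin n)),
      IsWitnessStructure G H' ψ' ∧
      ∑ h : Fin n, ({v : V | ψ' v = h}.ncard - 1) ≤ c ∧
      C ∪ I = Set.univ ∧ Disjoint C I ∧
      (∀ u ∈ C, ∀ v ∈ C, u ≠ v → H'.Adj u v) ∧
      (∀ u ∈ I, ∀ v ∈ I, ¬ H'.Adj u v) ∧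
      (∀ i ∈ I, {v : V | ψ' v = i}.ncard = 1) := by
  classical
  obtain ⟨hsurj, hfib, hiff⟩ := hw
  obtain ⟨C, I, hcov, hdis, hclq, hind⟩ := hsplit
  have hclq' : ∀ u ∈ C, ∀ v ∈ C, u ≠ v → (mapGraph G ψ).Adj u v :=
    fun u hu v hv hne => ⟨hne, (hiff u v hne).1 (hclq u hu v hv hne)⟩
  have hind' : ∀ u ∈ I, ∀ v ∈ I, ¬ (mapGraph G ψ).Adj u v := by
    rintro u hu v hv ⟨hne, hexi⟩
    exact hind u hu v hv ((hiff u v hne).2 hexi)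
  obtain ⟨ψ', C', I', hsurj', hfib', hcov', hdis', hclq'', hind'', htriv⟩ :=
    key G hGconn {i ∈ I | 2 ≤ {v | ψ v = i}.ncard}.ncard ψ C I hsurj hfib hcov hdis
      hclq' hind' le_rfl
  set n := Fintype.card W with hn
  set e : W ≃ Fin n := Fintype.equivFin W with he
  set ψ'' : V → Fin n := fun x => e (ψ' x) with hψ''
  have Efib : ∀ k : Fin n, {x | ψ'' x = k} = {x | ψ' x = e.symm k} := by
    intro k; ext x
    simp only [Set.mem_setOf_eq, hψ'']
    exact ⟨fun h => by rw [← h]; simp, fun h => by rw [h]; simp⟩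
  refine ⟨n, mapGraph G ψ'', ψ'', e '' C', e '' I', ?_, ?_, ?_, ?_, ?_, ?_, ?_⟩
  · refine ⟨e.surjective.comp hsurj', fun k => ?_, fun h h' hne => ?_⟩
    · rw [Efib k]; exact hfib' _
    · exact ⟨fun hadj => hadj.2, fun hexi => ⟨hne, hexi⟩⟩
  · -- cost
    have hone : ∀ h : W, {v | ψ v = h}.Nonempty :=
      fun h => Set.nonempty_coe_sort.1 (hfib h).nonempty
    have hone'' : ∀ k : Fin n, {v | ψ'' v = k}.Nonempty := by
      intro k
      obtain ⟨x, hx⟩ := (e.surjective.comp hsurj') k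
      exact ⟨x, hx⟩
    have hA := sum_fibers ψ hone
    have hB := sum_fibers ψ'' hone''
    rw [Fintype.card_fin] at hB
    omega
  · rw [← Set.image_union, hcov', Set.image_univ, e.surjective.range_eq]
  · exact (Set.disjoint_image_iff e.injective).2 hdis'
  · rintro _ ⟨a, haC, rfl⟩ _ ⟨b, hbC, rfl⟩ hne
    have hab : a ≠ b := fun h => hne (by rw [h])
    obtain ⟨-, u, w, h1, h2, h3⟩ := hclq'' a haC b hbC hab
    exact ⟨hne, u, w, h1, by rw [hψ'']; simp only [h2], by rw [hψ'']; simp only [h3]⟩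
  · rintro _ ⟨a, haI, rfl⟩ _ ⟨b, hbI, rfl⟩ ⟨hne, u, w, h1, h2, h3⟩
    refine hind'' a haI b hbI ⟨fun h => hne (congrArg e h), u, w, h1, ?_, ?_⟩
    · exact e.injective h2
    · exact e.injective h3
  · rintro _ ⟨a, haI, rfl⟩
    rw [Efib, Equiv.symm_apply_apply]
    exact htriv a haI
end

section
/- Let G be a connected graph and (X, Y) a partition of V(G) such that Y induces a clique in G. Let Y' ⊆ Y be such that every vertex of X that has a neighbor in Y also has a neighbor in Y'. Then for every subset Y'' ⊆ Y \ Y' with Y'' ≠ V(G), the induced subgraph G − Y'' is connected. -/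
/-- Let `G` be connected, `(X, Y)` a partition of its vertex set with `Y` a clique, and
`Y' ⊆ Y` such that every vertex of `X` with a neighbor in `Y` also has a neighbor in `Y'`.
Then deleting any set `Y'' ⊆ Y \ Y'` (with `Y''` not all of `V(G)`) leaves `G` connected. -/
theorem stmt_6 {V : Type*} [Fintype V] (G : SimpleGraph V) (hconn : G.Connected)
    (X Y : Set V) (hunion : X ∪ Y = Set.univ) (hdisj : Disjoint X Y)
    (hclique : ∀ u ∈ Y, ∀ v ∈ Y, u ≠ v → G.Adj u v)
    (Y' : Set V) (hY'sub : Y' ⊆ Y)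
    (hmark : ∀ x ∈ X, (∃ y ∈ Y, G.Adj x y) → ∃ y' ∈ Y', G.Adj x y')
    (Y'' : Set V) (hY''sub : Y'' ⊆ Y \ Y') (hY''ne : Y'' ≠ Set.univ) :
    (G.induce (Y''ᶜ)).Connected := by
  classical
  have hXmem : ∀ u : V, u ∉ Y → u ∈ X := by
    intro u hu
    have : u ∈ X ∪ Y := hunion ▸ Set.mem_univ u
    rcases this with h | h
    · exact h
    · exact absurd h hu
  by_cases hY : ∃ y0, y0 ∈ Y \ Y''
  · obtain ⟨y0, hy0Y, hy0n⟩ := hY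
    have key : ∀ {u v : V} (_ : G.Walk u v) (hu : u ∉ Y'') (hv : v ∈ Y \ Y''),
        (G.induce (Y''ᶜ)).Reachable ⟨u, hu⟩ ⟨v, hv.2⟩ := by
      intro u v p
      induction p with
      | nil => intro hu hv; exact SimpleGraph.Reachable.refl _
      | @cons u w v h p ih =>
        intro hu hv
        by_cases hw : w ∈ Y''
        · have hwY : w ∈ Y \ Y' := hY''sub hw
          by_cases huY : u ∈ Y
          · by_cases huv : u = v
            · subst huv; exact SimpleGraph.Reachable.refl _
            · have hadj : (G.induce (Y''ᶜ)).Adj ⟨u, hu⟩ ⟨v, hv.2⟩ :=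
                hclique u huY v hv.1 huv
              exact hadj.reachable
          · have huX : u ∈ X := hXmem u huY
            obtain ⟨y', hy'Y', hadj⟩ := hmark u huX ⟨w, hwY.1, h⟩
            have hy'n : y' ∉ Y'' := fun hc => (hY''sub hc).2 hy'Y'
            have e1 : (G.induce (Y''ᶜ)).Adj ⟨u, hu⟩ ⟨y', hy'n⟩ := hadj
            by_cases hyv : y' = v
            · subst hyv; exact e1.reachable
            · have e2 : (G.induce (Y''ᶜ)).Adj ⟨y', hy'n⟩ ⟨v, hv.2⟩ :=
                hclique y' (hY'sub hy'Y') v hv.1 hyv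
              exact e1.reachable.trans e2.reachable
        · have e1 : (G.induce (Y''ᶜ)).Adj ⟨u, hu⟩ ⟨w, hw⟩ := h
          exact e1.reachable.trans (ih hw hv)
    haveI : Nonempty ↑(Y''ᶜ) := ⟨⟨y0, hy0n⟩⟩
    refine SimpleGraph.Connected.mk fun a b => ?_
    obtain ⟨pa⟩ := hconn.preconnected a.1 y0
    obtain ⟨pb⟩ := hconn.preconnected b.1 y0
    exact (key pa a.2 ⟨hy0Y, hy0n⟩).trans (key pb b.2 ⟨hy0Y, hy0n⟩).symm
  · push_neg at hY
    have hYsub : Y ⊆ Y'' := fun y hy => by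
      by_contra hc; exact (hY y) ⟨hy, hc⟩
    have hY''eq : Y'' = Y := Set.Subset.antisymm (fun z hz => (hY''sub hz).1) hYsub
    have hY'empty : Y' = ∅ := by
      apply Set.eq_empty_of_forall_notMem
      intro y hy
      exact (hY''sub (hYsub (hY'sub hy))).2 hy
    -- Case: Y is empty
    by_cases hYe : Y = ∅
    · have : Y'' = ∅ := hY''eq.trans hYe
      subst this
      rw [Set.compl_empty]
      exact ((SimpleGraph.induceUnivIso G).connected_iff).mpr hconn
    · -- Y nonempty; show X empty, contradicting hY''ne, or find crossing edge contradiction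
      obtain ⟨y, hy⟩ := Set.nonempty_iff_ne_empty.mpr hYe
      by_cases hXe : X = ∅
      · exfalso
        apply hY''ne
        rw [hY''eq]
        rw [hXe, Set.empty_union] at hunion
        exact hunion
      · exfalso
        obtain ⟨x, hx⟩ := Set.nonempty_iff_ne_empty.mpr hXe
        -- there is a crossing edge
        have cross : ∀ {u v : V} (_ : G.Walk u v), u ∈ X → v ∈ Y →
            ∃ a ∈ X, ∃ b ∈ Y, G.Adj a b := by
          intro u v p
          induction p with
          | nil =>
            intro hu hv
            exact absurd (Set.disjoint_left.mp hdisj hu) (fun h => h hv)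
          | @cons u w v h p ih =>
            intro hu hv
            by_cases hwY : w ∈ Y
            · exact ⟨u, hu, w, hwY, h⟩
            · exact ih (hXmem w hwY) hv
        obtain ⟨p⟩ := hconn.preconnected x y
        obtain ⟨a, ha, b, hb, hab⟩ := cross p hx hy
        obtain ⟨y', hy', -⟩ := hmark a ha ⟨b, hb, hab⟩
        rw [hY'empty] at hy'
        exact hy'
end

section
/- Let k ≥ 2, t = binom(k,2), let G be a graph with |V(G)| ≥ k+1 together with an edge coloring φ : E(G) → {1,…,t}, let δ > 0 be a real number, and let G' be the gadget graph with parameters ρ = ⌈δt/k⌉, k' = 2t + ρk and k° = ⌈(5/2)k'⌉ + 2 constructed from (G, k, φ, δ). If G contains a set S of k vertices inducing a clique in G whose binom(k,2) edges receive pairwise distinct colors under φ, then there exists a set F' of at most k' edges of G' such that contracting the edges of F' transforms G' into a split graph; equivalently, G' is k'-contractible to a split graph. -/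
/-- Vertices of the gadget graph built from `(G, φ, ρ, kc, t)` (here `t = binom(k,2)`):
`ρ` copies `zCopy u i` of every vertex `u` of `G` plus `kc + 2` extra vertices `zExtra`
(together forming the clique `Z`); an edge-selector vertex `es e` for every edge `e` of
`G`; cap vertices `cap i` and special vertices `sp i` for every color `i`; and `kc`
private pendant neighbors for every vertex of `Z`, every cap vertex and every special
vertex. -/
inductive GadgetVertex (V : Type) (G : SimpleGraph V) (ρ kc t : ℕ) where
  | zCopy : V → Fin ρ → GadgetVertex V G ρ kc t
  | zExtra : Fin (kc + 2) → GadgetVertex V G ρ kc t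
  | es : {e : Sym2 V // e ∈ G.edgeSet} → GadgetVertex V G ρ kc t
  | cap : Fin t → GadgetVertex V G ρ kc t
  | sp : Fin t → GadgetVertex V G ρ kc t
  | pendZCopy : V → Fin ρ → Fin kc → GadgetVertex V G ρ kc t
  | pendZExtra : Fin (kc + 2) → Fin kc → GadgetVertex V G ρ kc t
  | pendCap : Fin t → Fin kc → GadgetVertex V G ρ kc t
  | pendSp : Fin t → Fin kc → GadgetVertex V G ρ kc t

/-- The base relation describing the edges of the gadget graph: `Z` is a clique; the
edge-selector vertex `es e` (for `e = uv` of color `φ e`) is adjacent to all of `Z`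
except the copies of `u` and `v`, to the cap vertex `cap (φ e)` and to the special
vertex `sp (φ e)`; the special vertices form a clique; and each pendant vertex is
adjacent exactly to its base vertex. -/
def gadgetRel (V : Type) (G : SimpleGraph V) (ρ kc t : ℕ)
    (φ : {e : Sym2 V // e ∈ G.edgeSet} → Fin t) :
    GadgetVertex V G ρ kc t → GadgetVertex V G ρ kc t → Prop
  | .zCopy _ _, .zCopy _ _ => True
  | .zCopy _ _, .zExtra _ => True
  | .zExtra _, .zCopy _ _ => True
  | .zExtra _, .zExtra _ => True
  | .es e, .zCopy u _ => u ∉ (e.val : Sym2 V)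
  | .es _, .zExtra _ => True
  | .es e, .cap i => φ e = i
  | .es e, .sp i => φ e = i
  | .sp _, .sp _ => True
  | .pendZCopy u i _, .zCopy u' i' => u = u' ∧ i = i'
  | .pendZExtra j _, .zExtra j' => j = j'
  | .pendCap i _, .cap i' => i = i'
  | .pendSp i _, .sp i' => i = i'
  | _, _ => False

/-- The gadget graph `G'` constructed from `(G, k, φ, δ)`. -/
def gadgetGraph (V : Type) (G : SimpleGraph V) (ρ kc t : ℕ)
    (φ : {e : Sym2 V // e ∈ G.edgeSet} → Fin t) :
    SimpleGraph (GadgetVertex V G ρ kc t) :=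
  SimpleGraph.fromRel (gadgetRel V G ρ kc t φ)

namespace StmtAux

open Classical

variable {V : Type} {G : SimpleGraph V} {ρ kc t : ℕ}

/-- `e` is an edge with both endpoints in `S`. -/
def isSE (S : Finset V) (e : {e : Sym2 V // e ∈ G.edgeSet}) : Prop :=
  ∀ x ∈ (e.val : Sym2 V), x ∈ S

open Classical in
/-- The contraction map on gadget vertices. -/
noncomputable def psi0 (φ : {e : Sym2 V // e ∈ G.edgeSet} → Fin t) (S : Finset V) :
    GadgetVertex V G ρ kc t → GadgetVertex V G ρ kc t
  | .zCopy u j => if u ∈ S then .zExtra 0 else .zCopy u j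
  | .es e => if isSE S e then .sp (φ e) else .es e
  | .cap i => .sp i
  | v => v

variable {φ : {e : Sym2 V // e ∈ G.edgeSet} → Fin t} {S : Finset V}

lemma psi0_zExtra (j : Fin (kc + 2)) : psi0 φ S (.zExtra j : GadgetVertex V G ρ kc t) = .zExtra j := rfl
lemma psi0_sp (i : Fin t) : psi0 φ S (.sp i : GadgetVertex V G ρ kc t) = .sp i := rfl
lemma psi0_cap (i : Fin t) : psi0 φ S (.cap i : GadgetVertex V G ρ kc t) = .sp i := rfl
lemma psi0_pendZCopy (u j m) : psi0 φ S (.pendZCopy u j m : GadgetVertex V G ρ kc t) = .pendZCopy u j m := rfl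
lemma psi0_pendZExtra (j m) : psi0 φ S (.pendZExtra j m : GadgetVertex V G ρ kc t) = .pendZExtra j m := rfl
lemma psi0_pendCap (i m) : psi0 φ S (.pendCap i m : GadgetVertex V G ρ kc t) = .pendCap i m := rfl
lemma psi0_pendSp (i m) : psi0 φ S (.pendSp i m : GadgetVertex V G ρ kc t) = .pendSp i m := rfl

lemma psi0_idem (v : GadgetVertex V G ρ kc t) : psi0 φ S (psi0 φ S v) = psi0 φ S v := by
  cases v <;> simp only [psi0] <;> split_ifs <;> simp_all [psi0]

lemma fiber_zCopy {v : GadgetVertex V G ρ kc t} {u j}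
    (h : psi0 φ S v = .zCopy u j) : v = .zCopy u j := by
  cases v <;> simp only [psi0] at h <;> (try split_ifs at h) <;> simp_all

lemma fiber_zExtra {v : GadgetVertex V G ρ kc t} {j}
    (h : psi0 φ S v = .zExtra j) : v = .zExtra j ∨ ∃ u j', u ∈ S ∧ v = .zCopy u j' := by
  cases v <;> simp only [psi0] at h <;> (try split_ifs at h) <;> simp_all

lemma fiber_es {v : GadgetVertex V G ρ kc t} {e}
    (h : psi0 φ S v = .es e) : v = .es e := by
  cases v <;> simp only [psi0] at h <;> (try split_ifs at h) <;> simp_all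

lemma fiber_sp {v : GadgetVertex V G ρ kc t} {i}
    (h : psi0 φ S v = .sp i) :
    v = .sp i ∨ v = .cap i ∨ ∃ e, isSE S e ∧ φ e = i ∧ v = .es e := by
  cases v <;> simp only [psi0] at h <;> (try split_ifs at h) <;> simp_all

lemma fiber_pendZCopy {v : GadgetVertex V G ρ kc t} {u j m}
    (h : psi0 φ S v = .pendZCopy u j m) : v = .pendZCopy u j m := by
  cases v <;> simp only [psi0] at h <;> (try split_ifs at h) <;> simp_all

lemma fiber_pendZExtra {v : GadgetVertex V G ρ kc t} {j m}
    (h : psi0 φ S v = .pendZExtra j m) : v = .pendZExtra j m := by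
  cases v <;> simp only [psi0] at h <;> (try split_ifs at h) <;> simp_all

lemma fiber_pendCap {v : GadgetVertex V G ρ kc t} {i m}
    (h : psi0 φ S v = .pendCap i m) : v = .pendCap i m := by
  cases v <;> simp only [psi0] at h <;> (try split_ifs at h) <;> simp_all

lemma fiber_pendSp {v : GadgetVertex V G ρ kc t} {i m}
    (h : psi0 φ S v = .pendSp i m) : v = .pendSp i m := by
  cases v <;> simp only [psi0] at h <;> (try split_ifs at h) <;> simp_all

lemma psi0_zCopy_fixed {u : V} {j : Fin ρ} (h : psi0 φ S (.zCopy u j : GadgetVertex V G ρ kc t) = .zCopy u j) :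
    u ∉ S := by
  intro hu; simp only [psi0, if_pos hu] at h; exact absurd h (by simp)

lemma psi0_cap_not_fixed (i : Fin t) : psi0 φ S (.cap i : GadgetVertex V G ρ kc t) ≠ .cap i := by
  simp [psi0]

/-- membership in a clique set. -/
def inC : GadgetVertex V G ρ kc t → Prop
  | .zCopy _ _ => True
  | .zExtra _ => True
  | .sp _ => True
  | _ => False

instance instFiniteGadget [Finite V] : Finite (GadgetVertex V G ρ kc t) := by
  let f : GadgetVertex V G ρ kc t →
      (V × Fin ρ) ⊕ (Fin (kc+2)) ⊕ {e : Sym2 V // e ∈ G.edgeSet} ⊕ (Fin t) ⊕ (Fin t) ⊕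
      (V × Fin ρ × Fin kc) ⊕ (Fin (kc+2) × Fin kc) ⊕ (Fin t × Fin kc) ⊕ (Fin t × Fin kc) :=
    fun v => match v with
    | .zCopy u j => .inl (u, j)
    | .zExtra j => .inr (.inl j)
    | .es e => .inr (.inr (.inl e))
    | .cap i => .inr (.inr (.inr (.inl i)))
    | .sp i => .inr (.inr (.inr (.inr (.inl i))))
    | .pendZCopy u j m => .inr (.inr (.inr (.inr (.inr (.inl (u, j, m))))))
    | .pendZExtra j m => .inr (.inr (.inr (.inr (.inr (.inr (.inl (j, m)))))))
    | .pendCap i m => .inr (.inr (.inr (.inr (.inr (.inr (.inr (.inl (i, m))))))))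
    | .pendSp i m => .inr (.inr (.inr (.inr (.inr (.inr (.inr (.inr (i, m))))))))
  have : Function.Injective f := by
    intro a b h
    cases a <;> cases b <;> simp_all [f]
  exact Finite.of_injective f this

end StmtAux

namespace Part2
variable {V : Type} {G : SimpleGraph V} {ρ kc t : ℕ}
  {φ : {e : Sym2 V // e ∈ G.edgeSet} → Fin t} {S : Finset V}
open StmtAux

lemma induce_connected_of_center {α : Type*} (G₀ : SimpleGraph α) (s : Set α) (a : α)
    (ha : a ∈ s) (h : ∀ b ∈ s, b = a ∨ G₀.Adj a b) : (G₀.induce s).Connected := by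
  have key : ∀ x : s, (G₀.induce s).Reachable x ⟨a, ha⟩ := by
    rintro ⟨b, hb⟩
    rcases h b hb with rfl | hadj
    · exact SimpleGraph.Reachable.refl _
    · exact SimpleGraph.Adj.reachable (by simpa using hadj.symm)
  haveI : Nonempty s := ⟨⟨a, ha⟩⟩
  exact ⟨fun x y => (key x).trans (key y).symm⟩

lemma fiber_singleton {r : GadgetVertex V G ρ kc t} (hr : psi0 φ S r = r)
    (hc : ¬ inC r) : ∀ v, psi0 φ S v = r → v = r := by
  intro v hv
  cases r with
  | zCopy u j => exact fiber_zCopy hv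
  | zExtra j => exact absurd trivial hc
  | sp i => exact absurd trivial hc
  | cap i => exact absurd hr (psi0_cap_not_fixed i)
  | es e => exact fiber_es hv
  | pendZCopy u j m => exact fiber_pendZCopy hv
  | pendZExtra j m => exact fiber_pendZExtra hv
  | pendCap i m => exact fiber_pendCap hv
  | pendSp i m => exact fiber_pendSp hv

lemma not_adj_nonC {r r' : GadgetVertex V G ρ kc t} (hr : psi0 φ S r = r)
    (hr' : psi0 φ S r' = r') (h1 : ¬ inC r) (h2 : ¬ inC r') :
    ¬ (gadgetGraph V G ρ kc t φ).Adj r r' := by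
  cases r <;> cases r' <;>
    first
      | exact absurd trivial h1
      | exact absurd trivial h2
      | exact absurd hr (psi0_cap_not_fixed _)
      | exact absurd hr' (psi0_cap_not_fixed _)
      | simp [gadgetGraph, gadgetRel, SimpleGraph.fromRel_adj]

end Part2

namespace Part3
open StmtAux
variable {V : Type} [Fintype V] {G : SimpleGraph V}

lemma se_sel {t : ℕ} {φ : {e : Sym2 V // e ∈ G.edgeSet} → Fin t} {S : Finset V}
    (ht : t = (S.card).choose 2)
    (hclique : ∀ u ∈ S, ∀ v ∈ S, u ≠ v → G.Adj u v)
    (hcolorful : ∀ e₁ e₂, isSE S e₁ → isSE S e₂ → φ e₁ = φ e₂ → e₁ = e₂) :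
    ∃ sel : Fin t → {e : {e : Sym2 V // e ∈ G.edgeSet} // isSE S e},
      ∀ i, φ (sel i).1 = i := by
  classical
  have hinj : Function.Injective (fun e : {e : {e : Sym2 V // e ∈ G.edgeSet} // isSE S e} => φ e.1) :=
    fun a b h => Subtype.ext (hcolorful _ _ a.2 b.2 h)
  have hcard1 : Fintype.card {e : {e : Sym2 V // e ∈ G.edgeSet} // isSE S e} ≤ t := by
    have := Fintype.card_le_of_injective _ hinj
    simpa using this
  have hedge : ∀ (p : Sym2 {x : V // x ∈ S}), ¬ p.IsDiag → p.map Subtype.val ∈ G.edgeSet := by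
    intro p hp
    induction p with
    | _ a b =>
      rw [Sym2.map_pair_eq, SimpleGraph.mem_edgeSet]
      exact hclique a.1 a.2 b.1 b.2 (fun h => hp (Sym2.mk_isDiag_iff.mpr (Subtype.ext h)))
  have hmem : ∀ (p : Sym2 {x : V // x ∈ S}), ∀ x ∈ p.map Subtype.val, x ∈ S := by
    intro p x hx
    rw [Sym2.mem_map] at hx
    obtain ⟨a, _, rfl⟩ := hx
    exact a.2
  let J : {p : Sym2 {x : V // x ∈ S} // ¬ p.IsDiag} →
      {e : {e : Sym2 V // e ∈ G.edgeSet} // isSE S e} :=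
    fun p => ⟨⟨p.1.map Subtype.val, hedge p.1 p.2⟩, fun x hx => hmem p.1 x hx⟩
  have hJinj : Function.Injective J := by
    intro p q h
    apply Subtype.ext
    have h' : (p.1.map Subtype.val : Sym2 V) = q.1.map Subtype.val :=
      congrArg (fun z => z.1.1) h
    exact Sym2.map.injective Subtype.val_injective h'
  have hcard2 : t ≤ Fintype.card {e : {e : Sym2 V // e ∈ G.edgeSet} // isSE S e} := by
    calc t = (Fintype.card {x : V // x ∈ S}).choose 2 := by rw [Fintype.card_coe]; exact ht
    _ = Fintype.card {p : Sym2 {x : V // x ∈ S} // ¬ p.IsDiag} := Sym2.card_subtype_not_diag.symm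
    _ ≤ _ := Fintype.card_le_of_injective J hJinj
  have hbij : Function.Bijective (fun e : {e : {e : Sym2 V // e ∈ G.edgeSet} // isSE S e} => φ e.1) :=
    (Fintype.bijective_iff_injective_and_card _).2 ⟨hinj, by rw [Fintype.card_fin]; omega⟩
  exact ⟨fun i => Function.surjInv hbij.2 i, fun i => Function.surjInv_eq hbij.2 i⟩

end Part3

namespace Part4
open StmtAux
variable {V : Type} {G : SimpleGraph V} {ρ kc t : ℕ}
  {φ : {e : Sym2 V // e ∈ G.edgeSet} → Fin t} {S : Finset V}

lemma clique_adj (sel : Fin t → {e : {e : Sym2 V // e ∈ G.edgeSet} // isSE S e})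
    (hsel : ∀ i, φ (sel i).1 = i)
    {r r' : GadgetVertex V G ρ kc t} (hr : psi0 φ S r = r) (hr' : psi0 φ S r' = r')
    (h1 : inC r) (h2 : inC r') (hne : r ≠ r') :
    ∃ x y, (gadgetGraph V G ρ kc t φ).Adj x y ∧ psi0 φ S x = r ∧ psi0 φ S y = r' := by
  have hes : ∀ i : Fin t, psi0 φ S (.es (sel i).1 : GadgetVertex V G ρ kc t) = .sp i := by
    intro i
    simp only [psi0]
    rw [if_pos (sel i).2, hsel i]
  cases r with
  | zCopy u0 j0 =>
    cases r' with
    | zCopy u1 j1 => exact ⟨_, _, (SimpleGraph.fromRel_adj _ _ _).2 ⟨hne, Or.inl trivial⟩, hr, hr'⟩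
    | zExtra j1 => exact ⟨_, _, (SimpleGraph.fromRel_adj _ _ _).2 ⟨hne, Or.inl trivial⟩, hr, hr'⟩
    | sp i =>
      refine ⟨.zCopy u0 j0, .es (sel i).1,
        (SimpleGraph.fromRel_adj _ _ _).2 ⟨by simp, Or.inr ?_⟩, hr, hes i⟩
      show u0 ∉ ((sel i).1.val : Sym2 V)
      exact fun hmem => (psi0_zCopy_fixed hr) ((sel i).2 u0 hmem)
    | es e => exact h2.elim
    | cap i => exact h2.elim
    | pendZCopy a b c => exact h2.elim
    | pendZExtra a b => exact h2.elim
    | pendCap a b => exact h2.elim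
    | pendSp a b => exact h2.elim
  | zExtra j0 =>
    cases r' with
    | zCopy u1 j1 => exact ⟨_, _, (SimpleGraph.fromRel_adj _ _ _).2 ⟨hne, Or.inl trivial⟩, hr, hr'⟩
    | zExtra j1 => exact ⟨_, _, (SimpleGraph.fromRel_adj _ _ _).2 ⟨hne, Or.inl trivial⟩, hr, hr'⟩
    | sp i =>
      exact ⟨.zExtra j0, .es (sel i).1,
        (SimpleGraph.fromRel_adj _ _ _).2 ⟨by simp, Or.inr trivial⟩, hr, hes i⟩
    | es e => exact h2.elim
    | cap i => exact h2.elim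
    | pendZCopy a b c => exact h2.elim
    | pendZExtra a b => exact h2.elim
    | pendCap a b => exact h2.elim
    | pendSp a b => exact h2.elim
  | sp i =>
    cases r' with
    | zCopy u1 j1 =>
      refine ⟨.es (sel i).1, .zCopy u1 j1,
        (SimpleGraph.fromRel_adj _ _ _).2 ⟨by simp, Or.inl ?_⟩, hes i, hr'⟩
      show u1 ∉ ((sel i).1.val : Sym2 V)
      exact fun hmem => (psi0_zCopy_fixed hr') ((sel i).2 u1 hmem)
    | zExtra j1 =>
      exact ⟨.es (sel i).1, .zExtra j1,
        (SimpleGraph.fromRel_adj _ _ _).2 ⟨by simp, Or.inl trivial⟩, hes i, hr'⟩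
    | sp i' => exact ⟨_, _, (SimpleGraph.fromRel_adj _ _ _).2 ⟨hne, Or.inl trivial⟩, hr, hr'⟩
    | es e => exact h2.elim
    | cap i' => exact h2.elim
    | pendZCopy a b c => exact h2.elim
    | pendZExtra a b => exact h2.elim
    | pendCap a b => exact h2.elim
    | pendSp a b => exact h2.elim
  | es e => exact h1.elim
  | cap i => exact h1.elim
  | pendZCopy a b c => exact h1.elim
  | pendZExtra a b => exact h1.elim
  | pendCap a b => exact h1.elim
  | pendSp a b => exact h1.elim

end Part4

/-- If `G` (with at least `k + 1` vertices) contains a colorful `k`-clique with respect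
to the edge coloring `φ`, then the gadget graph `G'` with parameters
`ρ = ⌈δt/k⌉`, `k' = 2t + ρk`, `k° = ⌈(5/2)k'⌉ + 2` (where `t = binom(k,2)`) is
`k'`-contractible to a split graph. -/


theorem stmt_10 {V : Type} [Fintype V] (k : ℕ) (hk : 2 ≤ k)
    (G : SimpleGraph V) (hV : k + 1 ≤ Fintype.card V)
    (φ : {e : Sym2 V // e ∈ G.edgeSet} → Fin (k.choose 2))
    (δ : ℝ) (hδ : 0 < δ)
    (ρ k' kc : ℕ)
    (hρ : ρ = ⌈δ * (k.choose 2 : ℝ) / (k : ℝ)⌉₊)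
    (hk' : k' = 2 * k.choose 2 + ρ * k)
    (hkc : kc = ⌈(5 : ℝ) / 2 * (k' : ℝ)⌉₊ + 2)
    (S : Finset V) (hS : S.card = k)
    (hclique : ∀ u ∈ S, ∀ v ∈ S, u ≠ v → G.Adj u v)
    (hcolorful : ∀ e₁ e₂ : {e : Sym2 V // e ∈ G.edgeSet},
      (∀ x ∈ (e₁.val : Sym2 V), x ∈ S) → (∀ x ∈ (e₂.val : Sym2 V), x ∈ S) →
      φ e₁ = φ e₂ → e₁ = e₂) :
    ∃ (n : ℕ) (H : SimpleGraph (Fin n))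
      (ψ : GadgetVertex V G ρ kc (k.choose 2) → Fin n),
      IsWitnessStructure (gadgetGraph V G ρ kc (k.choose 2) φ) H ψ ∧
      (∑ h : Fin n, ({v | ψ v = h}.ncard - 1)) ≤ k' ∧
      (∃ C I : Set (Fin n), C ∪ I = Set.univ ∧ Disjoint C I ∧
        (∀ u ∈ C, ∀ v ∈ C, u ≠ v → H.Adj u v) ∧
        (∀ u ∈ I, ∀ v ∈ I, ¬ H.Adj u v)) := by
  classical
  obtain ⟨sel, hsel⟩ := Part3.se_sel (t := k.choose 2) (φ := φ) (S := S)
    (by rw [hS]) hclique (fun e₁ e₂ h1 h2 => hcolorful e₁ e₂ h1 h2)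
  haveI : Finite V := inferInstance
  haveI : Fintype (GadgetVertex V G ρ kc (k.choose 2)) := Fintype.ofFinite _
  let GV := GadgetVertex V G ρ kc (k.choose 2)
  let T := {x : GV // StmtAux.psi0 φ S x = x}
  haveI : Fintype T := Fintype.ofFinite _
  let eT := Fintype.equivFin T
  let ψ1 : GV → T := fun v => ⟨StmtAux.psi0 φ S v, StmtAux.psi0_idem v⟩
  let n := Fintype.card T
  let ψ : GV → Fin n := fun v => eT (ψ1 v)
  let G' := gadgetGraph V G ρ kc (k.choose 2) φ
  let H : SimpleGraph (Fin n) :=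
    { Adj := fun a b => a ≠ b ∧ ∃ x y, G'.Adj x y ∧ ψ x = a ∧ ψ y = b
      symm := ⟨by rintro a b ⟨hne, x, y, hxy, hx, hy⟩; exact ⟨hne.symm, y, x, hxy.symm, hy, hx⟩⟩
      loopless := ⟨by rintro a ⟨hne, -⟩; exact hne rfl⟩ }
  have hψ_eq : ∀ (v : GV) (h : Fin n), ψ v = h ↔ StmtAux.psi0 φ S v = (eT.symm h).val := by
    intro v h
    constructor
    · intro hv
      have h1 : ψ1 v = eT.symm h := by rw [← hv]; exact (eT.symm_apply_apply _).symm
      exact congrArg Subtype.val h1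
    · intro hv
      have h1 : ψ1 v = eT.symm h := Subtype.ext hv
      show eT (ψ1 v) = h
      rw [h1, eT.apply_symm_apply]
  have hψr : ∀ h : Fin n, ψ (eT.symm h).val = h := by
    intro h
    exact (hψ_eq _ h).2 (eT.symm h).2
  refine ⟨n, H, ψ, ⟨?_, ?_, ?_⟩, ?_, {h | StmtAux.inC (eT.symm h).val},
    {h | StmtAux.inC (eT.symm h).val}ᶜ, Set.union_compl_self _, disjoint_compl_right, ?_, ?_⟩
  · -- surjective
    exact fun h => ⟨(eT.symm h).val, hψr h⟩
  · -- connected fibers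
    intro h
    have hfib : {v | ψ v = h} = {v | StmtAux.psi0 φ S v = (eT.symm h).val} :=
      Set.ext fun v => hψ_eq v h
    rw [hfib]
    have main : ∀ r : GV, StmtAux.psi0 φ S r = r →
        (G'.induce {v | StmtAux.psi0 φ S v = r}).Connected := by
      intro r hrfix
      cases r with
      | zCopy u j =>
        exact Part2.induce_connected_of_center _ _ _ hrfix
          (fun b hb => Or.inl (StmtAux.fiber_zCopy hb))
      | zExtra j =>
        refine Part2.induce_connected_of_center _ _ (.zExtra j) rfl ?_
        intro b hb
        rcases StmtAux.fiber_zExtra hb with rfl | ⟨u, j', hu, rfl⟩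
        · exact Or.inl rfl
        · exact Or.inr ((SimpleGraph.fromRel_adj _ _ _).2 ⟨by simp, Or.inl trivial⟩)
      | cap i => exact absurd hrfix (StmtAux.psi0_cap_not_fixed i)
      | es e =>
        exact Part2.induce_connected_of_center _ _ _ hrfix
          (fun b hb => Or.inl (StmtAux.fiber_es hb))
      | sp i =>
        have hesi : StmtAux.psi0 φ S (.es (sel i).1 : GV) = .sp i := by
          simp only [StmtAux.psi0]
          rw [if_pos (sel i).2, hsel i]
        refine Part2.induce_connected_of_center _ _ (.es (sel i).1) hesi ?_
        intro b hb
        rcases StmtAux.fiber_sp hb with rfl | rfl | ⟨e, hse, hφ, rfl⟩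
        · exact Or.inr ((SimpleGraph.fromRel_adj _ _ _).2 ⟨by simp, Or.inl (hsel i)⟩)
        · exact Or.inr ((SimpleGraph.fromRel_adj _ _ _).2 ⟨by simp, Or.inl (hsel i)⟩)
        · left
          have he : e = (sel i).1 := hcolorful _ _ hse (sel i).2 (by rw [hφ, hsel i])
          rw [he]
      | pendZCopy a b c =>
        exact Part2.induce_connected_of_center _ _ _ hrfix
          (fun b hb => Or.inl (StmtAux.fiber_pendZCopy hb))
      | pendZExtra a b =>
        exact Part2.induce_connected_of_center _ _ _ hrfix
          (fun b hb => Or.inl (StmtAux.fiber_pendZExtra hb))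
      | pendCap a b =>
        exact Part2.induce_connected_of_center _ _ _ hrfix
          (fun b hb => Or.inl (StmtAux.fiber_pendCap hb))
      | pendSp a b =>
        exact Part2.induce_connected_of_center _ _ _ hrfix
          (fun b hb => Or.inl (StmtAux.fiber_pendSp hb))
    exact main _ (eT.symm h).2
  · -- adjacency iff
    intro h h' hne
    exact ⟨fun ha => ha.2, fun hex => ⟨hne, hex⟩⟩
  · -- sum bound
    have hsum : ∀ h : Fin n, {v | ψ v = h}.ncard - 1 =
        ((Finset.univ.filter (fun v : GV => StmtAux.psi0 φ S v ≠ v)).filter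
          (fun v => ψ v = h)).card := by
      intro h
      have h1 : {v | ψ v = h} = ((Finset.univ.filter (fun v : GV => ψ v = h)) : Finset GV) := by
        ext v; simp
      rw [h1, Set.ncard_coe_finset]
      have h2 : (Finset.univ.filter (fun v : GV => ψ v = h)) =
          insert (eT.symm h).val ((Finset.univ.filter
            (fun v : GV => StmtAux.psi0 φ S v ≠ v)).filter (fun v => ψ v = h)) := by
        ext v
        simp only [Finset.mem_insert, Finset.mem_filter, Finset.mem_univ, true_and]
        constructor
        · intro hv
          by_cases hfx : StmtAux.psi0 φ S v = v
          · left; rw [← hfx]; exact (hψ_eq v h).1 hv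
          · exact Or.inr ⟨hfx, hv⟩
        · rintro (rfl | ⟨-, hv⟩)
          · exact hψr h
          · exact hv
      rw [h2, Finset.card_insert_of_notMem (by simp [(eT.symm h).2])]
      omega
    calc (∑ h : Fin n, ({v | ψ v = h}.ncard - 1))
        = ∑ h : Fin n, ((Finset.univ.filter (fun v : GV => StmtAux.psi0 φ S v ≠ v)).filter
            (fun v => ψ v = h)).card := Finset.sum_congr rfl fun h _ => hsum h
      _ = (Finset.univ.filter (fun v : GV => StmtAux.psi0 φ S v ≠ v)).card :=
          (Finset.card_eq_sum_card_fiberwise (fun v _ => Finset.mem_univ (ψ v))).symm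
      _ ≤ k' := by
          set F : Finset GV := Finset.univ.filter (fun v : GV => StmtAux.psi0 φ S v ≠ v) with hFdef
          set F1 : Finset GV := (S ×ˢ (Finset.univ : Finset (Fin ρ))).image
            (fun p => (GadgetVertex.zCopy p.1 p.2 : GV)) with hF1
          set F2 : Finset GV := (Finset.univ : Finset (Fin (k.choose 2))).image
            (fun i => (GadgetVertex.cap i : GV)) with hF2
          set F3 : Finset GV := (Finset.univ : Finset
            {e : {e : Sym2 V // e ∈ G.edgeSet} // StmtAux.isSE S e}).image
            (fun e => (GadgetVertex.es e.1 : GV)) with hF3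
          have hsub : F ⊆ F1 ∪ F2 ∪ F3 := by
            intro v hv
            rw [hFdef, Finset.mem_filter] at hv
            obtain ⟨-, hv⟩ := hv
            rcases v with ⟨u, j⟩ | j | e | i | i | ⟨a, b, c⟩ | ⟨a, b⟩ | ⟨a, b⟩ | ⟨a, b⟩
            · have hu : u ∈ S := by
                by_contra hu
                exact hv (by simp [StmtAux.psi0, hu])
              refine Finset.mem_union_left _ (Finset.mem_union_left _ ?_)
              rw [hF1, Finset.mem_image]
              exact ⟨(u, j), by simp [hu], rfl⟩
            · exact absurd rfl hv
            · have hse : StmtAux.isSE S e := by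
                by_contra hse
                exact hv (by simp [StmtAux.psi0, hse])
              refine Finset.mem_union_right _ ?_
              rw [hF3, Finset.mem_image]
              exact ⟨⟨e, hse⟩, Finset.mem_univ _, rfl⟩
            · refine Finset.mem_union_left _ (Finset.mem_union_right _ ?_)
              rw [hF2, Finset.mem_image]
              exact ⟨i, Finset.mem_univ _, rfl⟩
            · exact absurd rfl hv
            · exact absurd rfl hv
            · exact absurd rfl hv
            · exact absurd rfl hv
            · exact absurd rfl hv
          have hc1 : F1.card ≤ k * ρ := by
            refine (Finset.card_image_le).trans ?_
            rw [Finset.card_product, Finset.card_univ, Fintype.card_fin, hS]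
          have hc2 : F2.card ≤ k.choose 2 := by
            refine (Finset.card_image_le).trans ?_
            rw [Finset.card_univ, Fintype.card_fin]
          have hc3 : F3.card ≤ k.choose 2 := by
            refine (Finset.card_image_le).trans ?_
            rw [Finset.card_univ]
            have hinj : Function.Injective
                (fun e : {e : {e : Sym2 V // e ∈ G.edgeSet} // StmtAux.isSE S e} => φ e.1) :=
              fun a b h => Subtype.ext (hcolorful _ _ a.2 b.2 h)
            simpa using Fintype.card_le_of_injective _ hinj
          have := Finset.card_le_card hsub
          have := (Finset.card_union_le (F1 ∪ F2) F3)
          have := (Finset.card_union_le F1 F2)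
          have hmul : k * ρ = ρ * k := Nat.mul_comm _ _
          omega
  · -- clique
    intro u hu v hv hne
    have hvalne : (eT.symm u).val ≠ (eT.symm v).val := by
      intro he
      exact hne (by rw [← eT.apply_symm_apply u, ← eT.apply_symm_apply v,
        Subtype.ext he])
    obtain ⟨x, y, hxy, hx, hy⟩ := Part4.clique_adj sel hsel (eT.symm u).2 (eT.symm v).2 hu hv hvalne
    exact ⟨hne, x, y, hxy, (hψ_eq x u).2 hx, (hψ_eq y v).2 hy⟩
  · -- independent
    intro u hu v hv hadj
    obtain ⟨hne, x, y, hxy, hx, hy⟩ := hadj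
    rw [hψ_eq] at hx hy
    have hx' := Part2.fiber_singleton (eT.symm u).2 hu x hx
    have hy' := Part2.fiber_singleton (eT.symm v).2 hv y hy
    rw [hx', hy'] at hxy
    exact Part2.not_adj_nonC (eT.symm u).2 (eT.symm v).2 hu hv hxy
end
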